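/- arXiv:2603.03114 — 4 statements merged into one kernel-verified Lean document; each statement's English description precedes it below -/
import Mathlib

section
/- Let U be a banded unitary operator on ℓ²(ℤ) that admits an orthonormal basis (φ_j)_{j≥1} of ℓ²(ℤ) consisting of eigenvectors of U such that every φ_j belongs to D(X). Then for every ψ ∈ D(X), one has U^t ψ ∈ D(X) for all t ∈ ℕ and lim_{t→∞} (1/t²)·‖X U^t ψ‖² = 0. -/
open scoped ENNReal ComplexConjugate Classical
open Filter MeasureTheory

noncomputable section

abbrev l2Z : Type := lp (fun _ : ℤ => ℂ) 2

/-- The standard basis vector `δ_n` of `ℓ²(ℤ)`. -/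
def deltaVec (n : ℤ) : l2Z := lp.single 2 n 1

/-- Membership in the domain of the position operator `X`. -/
def InDomX (ψ : l2Z) : Prop := Memℓp (fun n : ℤ => (n : ℂ) * ψ n) 2

/-- The position operator `X`, defined (with junk value `0` off its domain). -/
def posX (ψ : l2Z) : l2Z :=
  if h : InDomX ψ then (⟨fun n : ℤ => (n : ℂ) * ψ n, h⟩ : l2Z) else 0

/-- A bounded operator on `ℓ²(ℤ)` is banded if its matrix elements vanish far from the
diagonal. -/
def Banded (U : l2Z →L[ℂ] l2Z) : Prop :=
  ∃ R : ℝ, 0 < R ∧ ∀ n m : ℤ, R < |(n : ℝ) - (m : ℝ)| →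
    (inner ℂ (deltaVec n) (U (deltaVec m)) : ℂ) = 0

/-- `‖X ψ‖²`, computed as an extended real (possibly `+∞`). -/
def XnormSq (ψ : l2Z) : ℝ≥0∞ := ∑' n : ℤ, ENNReal.ofReal ((n : ℝ) ^ 2 * ‖ψ n‖ ^ 2)


lemma two_toReal : (2 : ℝ≥0∞).toReal = 2 := by norm_num
lemma rpow_two_eq (x : ℝ) : x ^ ((2:ℝ≥0∞).toReal) = x ^ 2 := by
  rw [two_toReal, show ((2:ℝ)) = ((2:ℕ):ℝ) by norm_num, Real.rpow_natCast]
lemma memℓp_two_iff (f : ℤ → ℂ) : Memℓp f 2 ↔ Summable (fun n => ‖f n‖ ^ 2) := by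
  rw [memℓp_gen_iff (by norm_num [two_toReal] : 0 < (2:ℝ≥0∞).toReal)]
  exact summable_congr fun n => rpow_two_eq _
lemma lp_normSq (f : l2Z) : ‖f‖ ^ 2 = ∑' n, ‖f n‖ ^ 2 := by
  have h := lp.norm_rpow_eq_tsum (p := 2) (by norm_num [two_toReal]) f
  rw [rpow_two_eq] at h
  rw [h]; exact tsum_congr fun n => rpow_two_eq _
lemma lp_norm_le (f : l2Z) (M : ℝ) (hM : 0 ≤ M) (h : ∑' n, ‖f n‖ ^ 2 ≤ M ^ 2) : ‖f‖ ≤ M := by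
  have h2 : ‖f‖ ^ 2 ≤ M ^ 2 := (lp_normSq f) ▸ h
  nlinarith [norm_nonneg f]

lemma summable_coord_sq (ψ : l2Z) : Summable (fun n : ℤ => ‖ψ n‖ ^ 2) :=
  (memℓp_two_iff _).1 (lp.memℓp ψ)

lemma norm_deltaVec (n : ℤ) : ‖deltaVec n‖ = 1 := by
  have := lp.norm_single (p := 2) (E := fun _ : ℤ => ℂ) (by norm_num [two_toReal]) n (1:ℂ)
  simpa [deltaVec] using this

lemma coord_formula (U : l2Z →L[ℂ] l2Z) {R : ℝ}
    (hb : ∀ n m : ℤ, R < |(n:ℝ) - (m:ℝ)| → (inner ℂ (deltaVec n) (U (deltaVec m)) : ℂ) = 0)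
    (K : ℕ) (hK : R ≤ K) (χ : l2Z) (n : ℤ) :
    (U χ) n = ∑ m ∈ Finset.Icc (n - K) (n + K),
      (inner ℂ (deltaVec n) (U (deltaVec m)) : ℂ) * χ m := by
  have h1 : HasSum (fun m : ℤ => lp.single 2 m (χ m)) χ :=
    lp.hasSum_single ENNReal.ofNat_ne_top χ
  have h3 : HasSum (fun m : ℤ => (inner ℂ (deltaVec n) (U (lp.single 2 m (χ m))) : ℂ))
      (inner ℂ (deltaVec n) (U χ)) := (h1.mapL U).mapL (innerSL ℂ (deltaVec n))
  have hsingle : ∀ m : ℤ, lp.single 2 m (χ m) = χ m • deltaVec m := by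
    intro m; rw [deltaVec, ← lp.single_smul, smul_eq_mul, mul_one]
  have h4 : HasSum (fun m : ℤ => (inner ℂ (deltaVec n) (U (deltaVec m)) : ℂ) * χ m)
      (inner ℂ (deltaVec n) (U χ)) := by
    refine h3.congr_fun fun m => ?_
    rw [hsingle m, _root_.map_smul, inner_smul_right]; ring
  have hvanish : ∀ m : ℤ, m ∉ Finset.Icc (n - K) (n + K) →
      (inner ℂ (deltaVec n) (U (deltaVec m)) : ℂ) * χ m = 0 := by
    intro m hm
    rw [Finset.mem_Icc, not_and_or] at hm
    have : R < |(n:ℝ) - (m:ℝ)| := by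
      rcases hm with hm | hm
      · push_neg at hm
        have h' : (m:ℝ) + 1 ≤ (n:ℝ) - K := by exact_mod_cast hm
        rw [abs_of_pos (by linarith)]; linarith
      · push_neg at hm
        have h' : (n:ℝ) + K + 1 ≤ (m:ℝ) := by exact_mod_cast hm
        rw [abs_of_neg (by linarith)]; linarith
    rw [hb n m this, zero_mul]
  have h6 : (inner ℂ (deltaVec n) (U χ) : ℂ) = (U χ) n := by
    rw [deltaVec, lp.inner_single_left]; simp
  rw [← h6, h4.unique (hasSum_sum_of_ne_finset_zero hvanish)]

lemma comm_bound (U : l2Z →L[ℂ] l2Z) (hU : U ∈ unitary (l2Z →L[ℂ] l2Z)) {R : ℝ}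
    (hb : ∀ n m : ℤ, R < |(n:ℝ) - (m:ℝ)| → (inner ℂ (deltaVec n) (U (deltaVec m)) : ℂ) = 0) :
    ∃ C : ℝ, 0 ≤ C ∧ ∀ ψ : l2Z, InDomX ψ →
      InDomX (U ψ) ∧ ‖posX (U ψ)‖ ≤ ‖posX ψ‖ + C * ‖ψ‖ := by
  set K : ℕ := ⌈R⌉₊ with hKdef
  have hK : R ≤ (K:ℝ) := Nat.le_ceil R
  refine ⟨(K:ℝ) * (2*K+1), by positivity, ?_⟩
  intro ψ hψ
  set Xψ : l2Z := (⟨fun n : ℤ => (n : ℂ) * ψ n, hψ⟩ : l2Z) with hXψ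
  have hXψc : ∀ m : ℤ, Xψ m = (m : ℂ) * ψ m := fun m => rfl
  set a : ℤ → ℤ → ℂ := fun n m => (inner ℂ (deltaVec n) (U (deltaVec m)) : ℂ) with ha
  set D : ℤ → ℂ := fun n => ∑ m ∈ Finset.Icc (n - K) (n + K),
      ((n:ℂ) - (m:ℂ)) * a n m * ψ m with hD
  -- Step A : pointwise identity
  have stepA : ∀ n : ℤ, (n:ℂ) * (U ψ) n = (U Xψ) n + D n := by
    intro n
    rw [coord_formula U hb K hK ψ n, coord_formula U hb K hK Xψ n, Finset.mul_sum, hD]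
    rw [← Finset.sum_add_distrib]
    refine Finset.sum_congr rfl fun m _ => ?_
    rw [hXψc m]; ring
  -- norms of matrix elements
  have hanorm : ∀ n m : ℤ, ‖a n m‖ ≤ 1 := by
    intro n m
    calc ‖a n m‖ ≤ ‖deltaVec n‖ * ‖U (deltaVec m)‖ := norm_inner_le_norm _ _
    _ = 1 := by rw [U.norm_map_of_mem_unitary hU, norm_deltaVec, norm_deltaVec, mul_one]
  -- Step B : pointwise bound
  have stepB : ∀ n : ℤ, ‖D n‖ ≤ (K:ℝ) * ∑ m ∈ Finset.Icc (n - K) (n + K), ‖ψ m‖ := by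
    intro n
    rw [hD, Finset.mul_sum]
    refine (norm_sum_le _ _).trans (Finset.sum_le_sum fun m hm => ?_)
    rw [Finset.mem_Icc] at hm
    have h1 : ‖(n:ℂ) - (m:ℂ)‖ ≤ (K:ℝ) := by
      have : ((n:ℂ) - (m:ℂ)) = (((n:ℝ) - (m:ℝ) : ℝ) : ℂ) := by push_cast; ring
      rw [this, Complex.norm_real, Real.norm_eq_abs, abs_le]
      have hm1 : ((n - (K:ℤ) : ℤ) : ℝ) ≤ ((m : ℤ) : ℝ) := by exact_mod_cast hm.1
      have hm2 : ((m : ℤ) : ℝ) ≤ ((n + (K:ℤ) : ℤ) : ℝ) := by exact_mod_cast hm.2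
      push_cast at hm1 hm2
      constructor <;> linarith
    calc ‖((n:ℂ) - (m:ℂ)) * a n m * ψ m‖ = ‖(n:ℂ) - (m:ℂ)‖ * ‖a n m‖ * ‖ψ m‖ := by
          rw [norm_mul, norm_mul]
    _ ≤ (K:ℝ) * 1 * ‖ψ m‖ := by
          gcongr; exact hanorm n m
    _ = (K:ℝ) * ‖ψ m‖ := by ring
  -- cardinality of the window
  have hcard : ∀ n : ℤ, (Finset.Icc (n - K) (n + K)).card = 2*K+1 := by
    intro n
    rw [Int.card_Icc]
    have : n + K + 1 - (n - K) = ((2*K+1 : ℕ) : ℤ) := by push_cast; ring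
    rw [this, Int.toNat_natCast]
  -- Step C : squared pointwise bound
  have stepC : ∀ n : ℤ, ‖D n‖ ^ 2 ≤
      (K:ℝ)^2 * ((2*K+1 : ℕ):ℝ) * ∑ m ∈ Finset.Icc (n - K) (n + K), ‖ψ m‖ ^ 2 := by
    intro n
    have h1 : ‖D n‖ ^ 2 ≤ ((K:ℝ) * ∑ m ∈ Finset.Icc (n - K) (n + K), ‖ψ m‖) ^ 2 := by
      have hb' := stepB n
      have h0 : (0:ℝ) ≤ ‖D n‖ := norm_nonneg _
      nlinarith
    have h2 : (∑ m ∈ Finset.Icc (n - K) (n + K), ‖ψ m‖) ^ 2 ≤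
        ((2*K+1 : ℕ):ℝ) * ∑ m ∈ Finset.Icc (n - K) (n + K), ‖ψ m‖ ^ 2 := by
      have := sq_sum_le_card_mul_sum_sq (s := Finset.Icc (n - K) (n + K))
        (f := fun m => ‖ψ m‖)
      rwa [hcard n] at this
    calc ‖D n‖ ^ 2 ≤ ((K:ℝ) * ∑ m ∈ Finset.Icc (n - K) (n + K), ‖ψ m‖) ^ 2 := h1
    _ = (K:ℝ)^2 * (∑ m ∈ Finset.Icc (n - K) (n + K), ‖ψ m‖) ^ 2 := by ring
    _ ≤ (K:ℝ)^2 * (((2*K+1 : ℕ):ℝ) * ∑ m ∈ Finset.Icc (n - K) (n + K), ‖ψ m‖ ^ 2) := by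
        have : (0:ℝ) ≤ (K:ℝ)^2 := by positivity
        nlinarith
    _ = (K:ℝ)^2 * ((2*K+1 : ℕ):ℝ) * ∑ m ∈ Finset.Icc (n - K) (n + K), ‖ψ m‖ ^ 2 := by ring
  -- Step D : summability of the window sums
  set I : Finset ℤ := Finset.Icc (-(K:ℤ)) K with hI
  have hwin : ∀ n : ℤ, (∑ m ∈ Finset.Icc (n - K) (n + K), ‖ψ m‖ ^ 2)
      = ∑ d ∈ I, ‖ψ (n + d)‖ ^ 2 := by
    intro n
    have h : Finset.Icc (n - (K:ℤ)) (n + K) = (Finset.Icc (-(K:ℤ)) (K:ℤ)).map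
        (addLeftEmbedding n) := by
      rw [Finset.map_add_left_Icc]; congr 1 <;> ring
    rw [hI, h, Finset.sum_map]
    rfl
  have hsummable_shift : ∀ d : ℤ, Summable (fun n : ℤ => ‖ψ (n + d)‖ ^ 2) := by
    intro d
    exact ((Equiv.addRight d).summable_iff (f := fun n : ℤ => ‖ψ n‖^2)).mpr
      (summable_coord_sq ψ)
  have htsum_shift : ∀ d : ℤ, (∑' n : ℤ, ‖ψ (n + d)‖ ^ 2) = ∑' n : ℤ, ‖ψ n‖ ^ 2 := by
    intro d
    exact (Equiv.addRight d).tsum_eq (fun n => ‖ψ n‖ ^ 2)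
  have hgsummable : Summable (fun n : ℤ => ∑ d ∈ I, ‖ψ (n + d)‖ ^ 2) :=
    summable_sum fun d _ => hsummable_shift d
  have hgtsum : (∑' n : ℤ, ∑ d ∈ I, ‖ψ (n + d)‖ ^ 2)
      = ((2*K+1 : ℕ):ℝ) * ∑' n : ℤ, ‖ψ n‖ ^ 2 := by
    rw [Summable.tsum_finsetSum fun d _ => hsummable_shift d]
    rw [Finset.sum_congr rfl fun d _ => htsum_shift d]
    rw [Finset.sum_const]
    have : I.card = 2*K+1 := by rw [hI, Int.card_Icc]; congr 1; push_cast; omega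
    rw [this, nsmul_eq_mul]
  -- Step E : D is ℓ², with norm bound
  have hDsummable : Summable (fun n : ℤ => ‖D n‖ ^ 2) := by
    apply Summable.of_nonneg_of_le (fun n => by positivity)
      (fun n => (stepC n).trans_eq (by rw [hwin n]))
    exact (hgsummable.mul_left _)
  have hDmem : Memℓp D 2 := (memℓp_two_iff D).2 hDsummable
  set Dlp : l2Z := (⟨D, hDmem⟩ : l2Z) with hDlp
  have hDnorm : ‖Dlp‖ ≤ (K:ℝ) * (2*K+1) * ‖ψ‖ := by
    apply lp_norm_le _ _ (by positivity)
    have h1 : (∑' n : ℤ, ‖D n‖ ^ 2) ≤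
        (K:ℝ)^2 * ((2*K+1 : ℕ):ℝ) * ∑' n : ℤ, ∑ d ∈ I, ‖ψ (n + d)‖ ^ 2 := by
      rw [← tsum_mul_left]
      exact Summable.tsum_le_tsum (fun n => (stepC n).trans_eq (by rw [hwin n]))
        hDsummable (hgsummable.mul_left _)
    rw [hgtsum] at h1
    have h2 : ((K:ℝ) * (2*K+1) * ‖ψ‖) ^ 2
        = (K:ℝ)^2 * ((2*K+1 : ℕ):ℝ) * (((2*K+1 : ℕ):ℝ) * ‖ψ‖^2) := by push_cast; ring
    rw [lp_normSq ψ] at h2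
    calc (∑' n, ‖Dlp n‖ ^ 2) = ∑' n, ‖D n‖ ^ 2 := rfl
    _ ≤ _ := h1
    _ = _ := h2.symm
  -- Step F : U ψ is in the domain
  have hcoe : (fun n : ℤ => (n:ℂ) * (U ψ) n) = ⇑(U Xψ + Dlp) := by
    funext n
    rw [lp.coeFn_add, Pi.add_apply, stepA n]
  have hmem : InDomX (U ψ) := by
    rw [InDomX, hcoe]; exact lp.memℓp _
  refine ⟨hmem, ?_⟩
  -- Step G : norm bound
  have hposXU : posX (U ψ) = U Xψ + Dlp := by
    rw [posX, dif_pos hmem]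
    apply lp.ext
    simpa using hcoe
  have hposXψ : posX ψ = Xψ := by rw [posX, dif_pos hψ]
  rw [hposXU, hposXψ]
  calc ‖U Xψ + Dlp‖ ≤ ‖U Xψ‖ + ‖Dlp‖ := norm_add_le _ _
  _ ≤ ‖Xψ‖ + (K:ℝ) * (2*K+1) * ‖ψ‖ := by
      rw [U.norm_map_of_mem_unitary hU]
      gcongr

lemma inDomX_zero : InDomX (0 : l2Z) := by
  rw [InDomX]
  have : (fun n : ℤ => (n:ℂ) * (0 : l2Z) n) = (0 : ∀ _ : ℤ, ℂ) := by
    funext n; rw [lp.coeFn_zero]; simp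
  rw [this]
  exact zero_memℓp

lemma inDomX_add {f g : l2Z} (hf : InDomX f) (hg : InDomX g) : InDomX (f + g) := by
  rw [InDomX]
  have : (fun n : ℤ => (n:ℂ) * (f + g) n)
      = (fun n : ℤ => (n:ℂ) * f n) + (fun n : ℤ => (n:ℂ) * g n) := by
    funext n; rw [lp.coeFn_add]; simp; ring
  rw [this]
  exact hf.add hg

lemma inDomX_smul (c : ℂ) {f : l2Z} (hf : InDomX f) : InDomX (c • f) := by
  rw [InDomX]
  have : (fun n : ℤ => (n:ℂ) * (c • f) n) = c • (fun n : ℤ => (n:ℂ) * f n) := by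
    funext n; rw [lp.coeFn_smul]; simp; ring
  rw [this]
  exact hf.const_smul c

lemma inDomX_neg {f : l2Z} (hf : InDomX f) : InDomX (-f) := by
  have := inDomX_smul (-1 : ℂ) hf
  rwa [neg_one_smul] at this

lemma inDomX_sub {f g : l2Z} (hf : InDomX f) (hg : InDomX g) : InDomX (f - g) := by
  rw [sub_eq_add_neg]; exact inDomX_add hf (inDomX_neg hg)

lemma posX_coe {f : l2Z} (hf : InDomX f) (n : ℤ) : (posX f) n = (n:ℂ) * f n := by
  rw [posX, dif_pos hf]

lemma posX_add {f g : l2Z} (hf : InDomX f) (hg : InDomX g) :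
    posX (f + g) = posX f + posX g := by
  apply lp.ext
  funext n
  rw [lp.coeFn_add, Pi.add_apply, posX_coe (inDomX_add hf hg), posX_coe hf, posX_coe hg,
    lp.coeFn_add, Pi.add_apply]
  ring

lemma posX_smul (c : ℂ) {f : l2Z} (hf : InDomX f) : posX (c • f) = c • posX f := by
  apply lp.ext
  funext n
  rw [lp.coeFn_smul, Pi.smul_apply, posX_coe (inDomX_smul c hf), posX_coe hf,
    lp.coeFn_smul, Pi.smul_apply]
  simp; ring

lemma pow_apply_succ (U : l2Z →L[ℂ] l2Z) (t : ℕ) (x : l2Z) :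
    (U ^ (t+1)) x = U ((U ^ t) x) := by
  rw [pow_succ']
  rfl

lemma pow_unitary {U : l2Z →L[ℂ] l2Z} (hU : U ∈ unitary (l2Z →L[ℂ] l2Z)) (t : ℕ) :
    U ^ t ∈ unitary (l2Z →L[ℂ] l2Z) := pow_mem hU t

lemma iterate_bound (U : l2Z →L[ℂ] l2Z) (hU : U ∈ unitary (l2Z →L[ℂ] l2Z)) {C : ℝ}
    (hC : ∀ ψ : l2Z, InDomX ψ → InDomX (U ψ) ∧ ‖posX (U ψ)‖ ≤ ‖posX ψ‖ + C * ‖ψ‖)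
    (ψ : l2Z) (hψ : InDomX ψ) (t : ℕ) :
    InDomX ((U ^ t) ψ) ∧ ‖posX ((U ^ t) ψ)‖ ≤ ‖posX ψ‖ + t * C * ‖ψ‖ := by
  induction t with
  | zero => simpa using hψ
  | succ t ih =>
    have hnorm : ‖(U ^ t) ψ‖ = ‖ψ‖ :=
      (U ^ t).norm_map_of_mem_unitary (pow_unitary hU t) ψ
    obtain ⟨h1, h2⟩ := hC ((U ^ t) ψ) ih.1
    rw [pow_apply_succ]
    refine ⟨h1, ?_⟩
    rw [hnorm] at h2
    rw [Nat.cast_succ]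
    calc ‖posX (U ((U ^ t) ψ))‖ ≤ ‖posX ((U ^ t) ψ)‖ + C * ‖ψ‖ := h2
    _ ≤ (‖posX ψ‖ + t * C * ‖ψ‖) + C * ‖ψ‖ := by linarith [ih.2]
    _ = ‖posX ψ‖ + (t + 1) * C * ‖ψ‖ := by ring

lemma posX_zero : posX (0 : l2Z) = 0 := by
  rw [posX, dif_pos inDomX_zero]
  apply lp.ext
  funext n
  show (n:ℂ) * (0 : l2Z) n = (0 : l2Z) n
  rw [lp.coeFn_zero]; simp

lemma eig_pow {U : l2Z →L[ℂ] l2Z} {v : l2Z} {z : ℂ} (h : U v = z • v) (t : ℕ) :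
    (U ^ t) v = z ^ t • v := by
  induction t with
  | zero => simp
  | succ t ih =>
    rw [pow_apply_succ, ih, _root_.map_smul, h, smul_smul, ← pow_succ]

lemma finsum_dom_posX (φ : ℕ → l2Z) (hdom : ∀ j, InDomX (φ j)) (s : Finset ℕ) (w : ℕ → ℂ) :
    InDomX (∑ j ∈ s, w j • φ j) ∧ posX (∑ j ∈ s, w j • φ j) = ∑ j ∈ s, w j • posX (φ j) := by
  classical
  induction s using Finset.induction_on with
  | empty => simpa using ⟨inDomX_zero, posX_zero⟩
  | insert j s' hj ih =>
    rw [Finset.sum_insert hj, Finset.sum_insert hj]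
    have h1 : InDomX (w j • φ j) := inDomX_smul _ (hdom j)
    refine ⟨inDomX_add h1 ih.1, ?_⟩
    rw [posX_add h1 ih.1, posX_smul _ (hdom j), ih.2]

/-- If `U` is a banded unitary operator on `ℓ²(ℤ)` admitting an orthonormal
basis of eigenvectors all belonging to `D(X)`, then for every `ψ ∈ D(X)` one has
`Uᵗψ ∈ D(X)` for all `t` and `(1/t²)·‖X Uᵗ ψ‖² → 0` as `t → ∞`. -/
theorem stmt_0
    (U : l2Z →L[ℂ] l2Z) (hU : U ∈ unitary (l2Z →L[ℂ] l2Z)) (hband : Banded U)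
    (φ : ℕ → l2Z) (hON : Orthonormal ℂ φ)
    (hcomplete : (Submodule.span ℂ (Set.range φ)).topologicalClosure = ⊤)
    (heig : ∀ j, ∃ z : ℂ, U (φ j) = z • φ j)
    (hdom : ∀ j, InDomX (φ j))
    (ψ : l2Z) (hψ : InDomX ψ) :
    (∀ t : ℕ, InDomX ((U ^ t) ψ)) ∧
      Tendsto (fun t : ℕ => (1 / (t : ℝ) ^ 2) * ‖posX ((U ^ t) ψ)‖ ^ 2)
        atTop (nhds 0) := by
  obtain ⟨R, hR, hb⟩ := hband
  obtain ⟨C, hC0, hC⟩ := comm_bound U hU hb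
  choose z hz using heig
  have hz1 : ∀ j, ‖z j‖ = 1 := by
    intro j
    have h1 : ‖U (φ j)‖ = 1 := by rw [U.norm_map_of_mem_unitary hU, hON.1 j]
    rw [hz j, norm_smul, hON.1 j, mul_one] at h1
    exact h1
  refine ⟨fun t => (iterate_bound U hU hC ψ hψ t).1, ?_⟩
  have key : Tendsto (fun t : ℕ => (1 / (t:ℝ)) * ‖posX ((U ^ t) ψ)‖) atTop (nhds 0) := by
    have fnonneg : ∀ t : ℕ, 0 ≤ (1 / (t:ℝ)) * ‖posX ((U ^ t) ψ)‖ := fun t => by positivity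
    refine tendsto_order.2 ⟨?_, ?_⟩
    · intro b hb'
      exact Filter.Eventually.of_forall fun t => lt_of_lt_of_le hb' (fnonneg t)
    intro b hb'
    have hC1 : (0:ℝ) < C + 1 := by linarith
    set δ : ℝ := b / (2 * (C + 1)) with hδdef
    have hδ : 0 < δ := div_pos hb' (by linarith)
    have hdense : Dense ((Submodule.span ℂ (Set.range φ) : Submodule ℂ l2Z) : Set l2Z) :=
      Submodule.dense_iff_topologicalClosure_eq_top.mpr hcomplete
    obtain ⟨v, hv_mem, hv_close⟩ := hdense.exists_dist_lt ψ hδ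
    rw [dist_eq_norm] at hv_close
    obtain ⟨c, hc⟩ := Finsupp.mem_span_range_iff_exists_finsupp.mp hv_mem
    have hv_sum : v = ∑ j ∈ c.support, c j • φ j := by rw [← hc, Finsupp.sum]
    have hfd := finsum_dom_posX φ hdom c.support c
    rw [← hv_sum] at hfd
    obtain ⟨hv_dom, _⟩ := hfd
    set w : l2Z := ψ - v with hwdef
    have hw_dom : InDomX w := inDomX_sub hψ hv_dom
    have hw_norm : ‖w‖ < δ := hv_close
    set Kv : ℝ := ∑ j ∈ c.support, ‖c j‖ * ‖posX (φ j)‖ with hKv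
    have hKv0 : 0 ≤ Kv := Finset.sum_nonneg fun j _ => by positivity
    have hbound_v : ∀ t : ℕ, InDomX ((U^t) v) ∧ ‖posX ((U ^ t) v)‖ ≤ Kv := by
      intro t
      have hUtv : (U ^ t) v = ∑ j ∈ c.support, (z j ^ t * c j) • φ j := by
        rw [hv_sum, _root_.map_sum]
        refine Finset.sum_congr rfl fun j _ => ?_
        rw [_root_.map_smul, eig_pow (hz j) t, smul_smul, mul_comm]
      have h := finsum_dom_posX φ hdom c.support (fun j => z j ^ t * c j)
      rw [← hUtv] at h
      refine ⟨h.1, ?_⟩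
      rw [h.2]
      calc ‖∑ j ∈ c.support, (z j ^ t * c j) • posX (φ j)‖
          ≤ ∑ j ∈ c.support, ‖(z j ^ t * c j) • posX (φ j)‖ := norm_sum_le _ _
      _ = ∑ j ∈ c.support, ‖c j‖ * ‖posX (φ j)‖ := by
          refine Finset.sum_congr rfl fun j _ => ?_
          rw [norm_smul, norm_mul, norm_pow, hz1 j, one_pow, one_mul]
      _ = Kv := rfl
    set A : ℝ := Kv + ‖posX w‖ with hA
    have hA0 : 0 ≤ A := by positivity
    have hest : ∀ t : ℕ, 1 ≤ t → (1 / (t:ℝ)) * ‖posX ((U ^ t) ψ)‖ ≤ A / t + C * ‖w‖ := by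
      intro t ht
      have htpos : (0:ℝ) < t := by exact_mod_cast ht
      have hsplit : (U ^ t) ψ = (U ^ t) v + (U ^ t) w := by
        rw [hwdef, _root_.map_sub]; abel
      obtain ⟨hvd, hvb⟩ := hbound_v t
      obtain ⟨hwd, hwb⟩ := iterate_bound U hU hC w hw_dom t
      have hkey : ‖posX ((U ^ t) ψ)‖ ≤ Kv + (‖posX w‖ + t * C * ‖w‖) := by
        rw [hsplit, posX_add hvd hwd]
        calc ‖posX ((U ^ t) v) + posX ((U ^ t) w)‖
            ≤ ‖posX ((U ^ t) v)‖ + ‖posX ((U ^ t) w)‖ := norm_add_le _ _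
        _ ≤ Kv + (‖posX w‖ + t * C * ‖w‖) := add_le_add hvb hwb
      calc (1 / (t:ℝ)) * ‖posX ((U ^ t) ψ)‖
          ≤ (1/(t:ℝ)) * (Kv + (‖posX w‖ + t * C * ‖w‖)) :=
            mul_le_mul_of_nonneg_left hkey (by positivity)
      _ = A / t + C * ‖w‖ := by
            rw [hA]; field_simp; ring
    have hCw : C * ‖w‖ < b / 2 := by
      have hxx : δ * (2*(C+1)) = b := by
        rw [hδdef]; field_simp
      have h1 : C * ‖w‖ ≤ C * δ := mul_le_mul_of_nonneg_left hw_norm.le hC0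
      nlinarith [hδ]
    have htend : Tendsto (fun t : ℕ => A / (t:ℝ)) atTop (nhds 0) :=
      tendsto_const_div_atTop_nhds_zero_nat A
    have hev1 : ∀ᶠ t : ℕ in atTop, A / (t:ℝ) < b - C * ‖w‖ :=
      htend.eventually_lt_const (by
        have : 0 ≤ C * ‖w‖ := mul_nonneg hC0 (norm_nonneg w)
        linarith)
    filter_upwards [hev1, Filter.eventually_ge_atTop 1] with t h1 h2
    calc (1 / (t:ℝ)) * ‖posX ((U ^ t) ψ)‖ ≤ A / t + C * ‖w‖ := hest t h2
    _ < (b - C * ‖w‖) + C * ‖w‖ := by linarith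
    _ = b := by ring
  have key2 : Tendsto (fun t : ℕ => ((1 / (t:ℝ)) * ‖posX ((U ^ t) ψ)‖) ^ 2)
      atTop (nhds ((0:ℝ) ^ 2)) := key.pow 2
  rw [show ((0:ℝ))^2 = 0 by norm_num] at key2
  refine key2.congr fun t => ?_
  ring

end
end

section
/- Let H be a Hilbert space, P : H → H an orthogonal projection, U : H → H a unitary operator, and let δ = φ + ψ be a unit vector with ⟨φ, ψ⟩ = 0. Then for every positive integer T, (1/T) Σ_{t=T}^{2T−1} ‖(1 − P) U^t δ‖² ≥ ‖ψ‖² − 3·( (1/T) Σ_{t=T}^{2T−1} ‖P U^t ψ‖² )^{1/2}. -/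
open Filter

/-- If `P` is an orthogonal projection on a Hilbert space `H`, `U` is unitary,
and `δ = φ + ψ` is a unit vector with `⟨φ, ψ⟩ = 0`, then for every positive integer `T`,
`(1/T) ∑_{t=T}^{2T-1} ‖(1 - P)Uᵗδ‖² ≥ ‖ψ‖² - 3·((1/T) ∑_{t=T}^{2T-1} ‖P Uᵗ ψ‖²)^{1/2}`. -/
theorem stmt_9
    {H : Type*} [NormedAddCommGroup H] [InnerProductSpace ℂ H] [CompleteSpace H]
    (P : H →L[ℂ] H) (hP_idem : P ∘L P = P) (hP_sa : IsSelfAdjoint P)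
    (U : H →L[ℂ] H) (hU : U ∈ unitary (H →L[ℂ] H))
    (φ ψ δ : H) (hδ : δ = φ + ψ) (hδ_unit : ‖δ‖ = 1) (horth : (inner ℂ φ ψ : ℂ) = 0)
    (T : ℕ) (hT : 0 < T) :
    ‖ψ‖ ^ 2 - 3 * Real.sqrt ((1 / (T : ℝ)) * ∑ t ∈ Finset.Ico T (2 * T), ‖P ((U ^ t) ψ)‖ ^ 2) ≤
      (1 / (T : ℝ)) * ∑ t ∈ Finset.Ico T (2 * T), ‖(1 - P) ((U ^ t) δ)‖ ^ 2 := by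
  have hTpos : (0 : ℝ) < T := by exact_mod_cast hT
  set S := Finset.Ico T (2 * T) with hS
  have hcard : S.card = T := by simp [hS]; omega
  have hUt : ∀ t : ℕ, (U ^ t) ∈ unitary (H →L[ℂ] H) := fun t => pow_mem hU t
  have hnormU : ∀ (t : ℕ) (x : H), ‖(U ^ t) x‖ = ‖x‖ := fun t x =>
    ContinuousLinearMap.norm_map_of_mem_unitary (hUt t) x
  -- adjoint of P is P
  have hPadj : ContinuousLinearMap.adjoint P = P := hP_sa
  -- Pythagoras for P
  have hPyth : ∀ x : H, ‖P x‖ ^ 2 + ‖(1 - P) x‖ ^ 2 = ‖x‖ ^ 2 := by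
    intro x
    have hzero : (inner ℂ (P x) ((1 - P) x) : ℂ) = 0 := by
      have : (inner ℂ (P x) ((1 - P) x) : ℂ) = inner ℂ x (P ((1 - P) x)) := by
        rw [← ContinuousLinearMap.adjoint_inner_right, hPadj]
      rw [this]
      have h2 : P (P x) = P x := by
        have := congrArg (fun A => A x) hP_idem
        simpa using this
      have hP0 : P ((1 - P) x) = 0 := by
        simp [ContinuousLinearMap.sub_apply, map_sub, h2]
      rw [hP0, inner_zero_right]
    have := norm_add_sq_eq_norm_sq_add_norm_sq_of_inner_eq_zero (P x) ((1 - P) x) hzero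
    have hx : P x + (1 - P) x = x := by
      simp [ContinuousLinearMap.sub_apply, ContinuousLinearMap.one_apply]
    rw [hx] at this
    linarith
  have hPnorm : ∀ x : H, ‖P x‖ ≤ ‖x‖ := by
    intro x
    have h := hPyth x
    nlinarith [norm_nonneg (P x), norm_nonneg x, sq_nonneg (‖(1 - P) x‖)]
  -- norms of φ and ψ
  have hφψ : ‖φ‖ ^ 2 + ‖ψ‖ ^ 2 = 1 := by
    have := norm_add_sq_eq_norm_sq_add_norm_sq_of_inner_eq_zero φ ψ horth
    rw [← hδ, hδ_unit] at this; linarith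
  have hφ1 : ‖φ‖ ≤ 1 := by nlinarith [norm_nonneg φ, sq_nonneg ‖ψ‖]
  have hψ1 : ‖ψ‖ ≤ 1 := by nlinarith [norm_nonneg ψ, sq_nonneg ‖φ‖]
  -- pointwise bound
  have hpt : ∀ t : ℕ, ‖ψ‖ ^ 2 - 3 * ‖P ((U ^ t) ψ)‖ ≤ ‖(1 - P) ((U ^ t) δ)‖ ^ 2 := by
    intro t
    set a := ‖P ((U ^ t) ψ)‖ with ha
    have ha0 : 0 ≤ a := norm_nonneg _
    have ha1 : a ≤ 1 := (hPnorm _).trans ((hnormU t ψ).le.trans hψ1)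
    have hb1 : ‖P ((U ^ t) φ)‖ ≤ 1 := (hPnorm _).trans ((hnormU t φ).le.trans hφ1)
    have hb0 : 0 ≤ ‖P ((U ^ t) φ)‖ := norm_nonneg _
    have hbφ : ‖P ((U ^ t) φ)‖ ≤ ‖φ‖ := (hPnorm _).trans (hnormU t φ).le
    have hsplit : P ((U ^ t) δ) = P ((U ^ t) φ) + P ((U ^ t) ψ) := by
      rw [hδ]; simp [map_add]
    have htri : ‖P ((U ^ t) δ)‖ ≤ ‖P ((U ^ t) φ)‖ + a := by
      rw [hsplit]; exact norm_add_le _ _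
    have hPδ0 : 0 ≤ ‖P ((U ^ t) δ)‖ := norm_nonneg _
    have hsq : ‖P ((U ^ t) δ)‖ ^ 2 ≤ ‖φ‖ ^ 2 + 3 * a := by
      nlinarith
    have hpyt := hPyth ((U ^ t) δ)
    have hnδ : ‖(U ^ t) δ‖ = 1 := by rw [hnormU t δ, hδ_unit]
    rw [hnδ] at hpyt
    nlinarith
  -- sum the bounds
  have hsum : (T : ℝ) * ‖ψ‖ ^ 2 - 3 * ∑ t ∈ S, ‖P ((U ^ t) ψ)‖ ≤
      ∑ t ∈ S, ‖(1 - P) ((U ^ t) δ)‖ ^ 2 := by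
    have := Finset.sum_le_sum (s := S) (fun t _ => hpt t)
    calc (T : ℝ) * ‖ψ‖ ^ 2 - 3 * ∑ t ∈ S, ‖P ((U ^ t) ψ)‖
        = ∑ t ∈ S, (‖ψ‖ ^ 2 - 3 * ‖P ((U ^ t) ψ)‖) := by
          rw [Finset.sum_sub_distrib, Finset.sum_const, hcard, ← Finset.mul_sum]
          ring
      _ ≤ _ := this
  -- Cauchy–Schwarz step
  have hCS : (1 / (T : ℝ)) * ∑ t ∈ S, ‖P ((U ^ t) ψ)‖ ≤
      Real.sqrt ((1 / (T : ℝ)) * ∑ t ∈ S, ‖P ((U ^ t) ψ)‖ ^ 2) := by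
    have hcs := sq_sum_le_card_mul_sum_sq (s := S) (f := fun t => ‖P ((U ^ t) ψ)‖)
    rw [hcard] at hcs
    have h0 : 0 ≤ (1 / (T : ℝ)) * ∑ t ∈ S, ‖P ((U ^ t) ψ)‖ := by positivity
    rw [Real.le_sqrt h0 (by positivity)]
    rw [mul_pow]
    calc (1 / (T : ℝ)) ^ 2 * (∑ t ∈ S, ‖P ((U ^ t) ψ)‖) ^ 2
        ≤ (1 / (T : ℝ)) ^ 2 * ((T : ℝ) * ∑ t ∈ S, ‖P ((U ^ t) ψ)‖ ^ 2) := by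
          apply mul_le_mul_of_nonneg_left _ (by positivity)
          exact_mod_cast hcs
      _ = (1 / (T : ℝ)) * ∑ t ∈ S, ‖P ((U ^ t) ψ)‖ ^ 2 := by
          field_simp
  -- finish
  have h1 : ‖ψ‖ ^ 2 - 3 * ((1 / (T : ℝ)) * ∑ t ∈ S, ‖P ((U ^ t) ψ)‖) ≤
      (1 / (T : ℝ)) * ∑ t ∈ S, ‖(1 - P) ((U ^ t) δ)‖ ^ 2 := by
    have := mul_le_mul_of_nonneg_left hsum (le_of_lt (one_div_pos.mpr hTpos))
    calc ‖ψ‖ ^ 2 - 3 * ((1 / (T : ℝ)) * ∑ t ∈ S, ‖P ((U ^ t) ψ)‖)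
        = (1 / (T : ℝ)) * ((T : ℝ) * ‖ψ‖ ^ 2 - 3 * ∑ t ∈ S, ‖P ((U ^ t) ψ)‖) := by
          field_simp
      _ ≤ _ := this
  linarith [mul_le_mul_of_nonneg_left hCS (by norm_num : (0:ℝ) ≤ 3)]
end

section
/- Let H be a Hilbert space, U : H → H a unitary operator, and ψ ∈ H. Suppose there is a bounded measurable function F : [0,2π) → [0,∞) such that ⟨ψ, U^t ψ⟩ = (1/2π)·∫_0^{2π} e^{−itθ}·F(θ) dθ for every t ∈ ℤ. Then for every φ ∈ H, Σ_{t∈ℤ} |⟨φ, U^t ψ⟩|² ≤ (ess sup F)·‖φ‖². -/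
open Filter MeasureTheory

lemma exp_int_integral (k : ℤ) :
    (∫ θ in Set.Ico (0:ℝ) (2*Real.pi), Complex.exp (Complex.I * (k:ℂ) * (θ:ℂ))) =
      if k = 0 then (2*Real.pi : ℂ) else 0 := by
  have h2 : (0:ℝ) ≤ 2*Real.pi := by positivity
  rw [integral_Ico_eq_integral_Ioo, ← integral_Ioc_eq_integral_Ioo,
    ← intervalIntegral.integral_of_le h2]
  by_cases hk : k = 0
  · subst hk; simp
  · have hc : (Complex.I * (k:ℂ)) ≠ 0 := by
      simp [Complex.I_ne_zero, hk]
    rw [if_neg hk]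
    have h3 := integral_exp_mul_complex (a := (0:ℝ)) (b := 2*Real.pi) hc
    simp only [mul_assoc] at h3 ⊢
    rw [h3]
    have h1 : Complex.I * ((k:ℂ) * ((2*Real.pi : ℝ):ℂ)) = (k:ℂ) * (2*Real.pi*Complex.I) := by
      push_cast; ring
    rw [h1, Complex.exp_int_mul_two_pi_mul_I]
    simp

lemma norm_exp_neg_I_int (k : ℤ) (θ : ℝ) :
    ‖Complex.exp (-Complex.I * (k:ℂ) * (θ:ℂ))‖ = 1 := by
  rw [Complex.norm_exp]
  simp [Complex.mul_re]

lemma norm_exp_I_int (k : ℤ) (θ : ℝ) :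
    ‖Complex.exp (Complex.I * (k:ℂ) * (θ:ℂ))‖ = 1 := by
  rw [Complex.norm_exp]
  simp [Complex.mul_re]

set_option maxHeartbeats 1000000 in
/-- Let `U` be a unitary on a Hilbert space `H` and `ψ ∈ H`.  If there is a
bounded measurable `F : [0,2π) → [0,∞)` with
`⟨ψ, Uᵗψ⟩ = (1/2π)∫₀^{2π} e^{-itθ} F(θ) dθ` for all `t ∈ ℤ`, then for every `φ ∈ H`,
`∑_{t∈ℤ} |⟨φ, Uᵗψ⟩|² ≤ (ess sup F)·‖φ‖²`. -/
theorem stmt_10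
    {H : Type*} [NormedAddCommGroup H] [InnerProductSpace ℂ H] [CompleteSpace H]
    (U : unitary (H →L[ℂ] H)) (ψ : H)
    (F : ℝ → ℝ) (hF_meas : Measurable F) (hF_nonneg : ∀ θ : ℝ, 0 ≤ F θ)
    (hF_bdd : BddAbove (Set.range F))
    (hFourier : ∀ t : ℤ,
      (inner ℂ ψ (((U ^ t : unitary (H →L[ℂ] H)) : H →L[ℂ] H) ψ) : ℂ) =
        (1 / (2 * (Real.pi : ℂ))) *
          ∫ θ in Set.Ico (0 : ℝ) (2 * Real.pi),
            Complex.exp (-Complex.I * (t : ℂ) * (θ : ℂ)) * (F θ : ℂ)) :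
    ∀ φ : H,
      ∑' t : ℤ, ‖(inner ℂ φ (((U ^ t : unitary (H →L[ℂ] H)) : H →L[ℂ] H) ψ) : ℂ)‖ ^ 2 ≤
        essSup F (volume.restrict (Set.Ico (0 : ℝ) (2 * Real.pi))) * ‖φ‖ ^ 2 := by
  intro φ
  obtain ⟨C, hCmem⟩ := hF_bdd
  have hC : ∀ θ, F θ ≤ C := fun θ => hCmem ⟨θ, rfl⟩
  set μ := volume.restrict (Set.Ico (0:ℝ) (2*Real.pi)) with hμdef
  set M := essSup F μ with hMdef
  have hπ : (0:ℝ) < 2*Real.pi := by positivity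
  have hμne : μ ≠ 0 := by
    rw [hμdef, Ne, Measure.restrict_eq_zero, Real.volume_Ico]
    simp [ENNReal.ofReal_eq_zero]
    linarith
  have hFM : ∀ᵐ θ ∂μ, F θ ≤ M :=
    ae_le_essSup (Filter.isBoundedUnder_of ⟨C, hC⟩)
  have hM0 : (0:ℝ) ≤ M := by
    have : (ae μ).NeBot := ae_neBot.mpr hμne
    obtain ⟨θ, hθ⟩ := hFM.exists
    exact (hF_nonneg θ).trans hθ
  have hC0 : (0:ℝ) ≤ C := le_trans (hF_nonneg 0) (hC 0)
  haveI hμfin : IsFiniteMeasure μ := by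
    constructor
    rw [hμdef, Measure.restrict_apply_univ, Real.volume_Ico]
    exact ENNReal.ofReal_lt_top
  set a : ℤ → ℂ := fun t =>
    (inner ℂ φ (((U ^ t : unitary (H →L[ℂ] H)) : H →L[ℂ] H) ψ) : ℂ) with hadef
  show ∑' t : ℤ, ‖a t‖ ^ 2 ≤ M * ‖φ‖ ^ 2
  -- measurability / integrability prerequisites
  have hFc_meas : Measurable fun θ : ℝ => (F θ : ℂ) :=
    Complex.measurable_ofReal.comp hF_meas
  have hexp_meas : ∀ z : ℂ, Measurable fun θ : ℝ => Complex.exp (z * (θ:ℂ)) := by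
    intro z
    exact Complex.measurable_exp.comp ((Complex.measurable_ofReal).const_mul z)
  have hexpF : ∀ k : ℤ, Integrable
      (fun θ : ℝ => Complex.exp (-Complex.I * (k:ℂ) * (θ:ℂ)) * (F θ : ℂ)) μ := by
    intro k
    refine Integrable.mono' (integrable_const C) ?_ ?_
    · refine Measurable.aestronglyMeasurable (Measurable.mul ?_ hFc_meas)
      simpa [mul_assoc] using hexp_meas (-Complex.I * (k:ℂ))
    · filter_upwards with θ
      rw [norm_mul, norm_exp_neg_I_int, one_mul, Complex.norm_real,
        Real.norm_eq_abs, abs_of_nonneg (hF_nonneg θ)]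
      exact hC θ
  have hexp1 : ∀ k : ℤ, Integrable
      (fun θ : ℝ => Complex.exp (Complex.I * (k:ℂ) * (θ:ℂ))) μ := by
    intro k
    refine Integrable.mono' (integrable_const 1) ?_ ?_
    · refine Measurable.aestronglyMeasurable ?_
      simpa [mul_assoc] using hexp_meas (Complex.I * (k:ℂ))
    · filter_upwards with θ
      rw [norm_exp_I_int]
  have key : ∀ s : Finset ℤ, ∑ t ∈ s, ‖a t‖ ^ 2 ≤ M * ‖φ‖ ^ 2 := by
    intro s
    classical
    set c : ℤ → ℂ := fun t => (starRingEnd ℂ) (a t) with hcdef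
    set v : H := ∑ t ∈ s, c t • (((U ^ t : unitary (H →L[ℂ] H)) : H →L[ℂ] H) ψ) with hvdef
    set g : ℝ → ℂ := fun θ => ∑ t ∈ s, c t * Complex.exp (-Complex.I * (t:ℂ) * (θ:ℂ)) with hgdef
    set S : ℝ := ∑ t ∈ s, ‖a t‖ ^ 2 with hSdef
    have hg_meas : Measurable g := by
      rw [hgdef]
      refine Finset.measurable_sum s fun t _ => Measurable.const_mul ?_ (c t)
      simpa [mul_assoc] using hexp_meas (-Complex.I * (t:ℂ))
    set B : ℝ := ∑ t ∈ s, ‖c t‖ with hBdef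
    have hgB : ∀ θ : ℝ, ‖g θ‖ ≤ B := by
      intro θ
      rw [hgdef, hBdef]
      refine (norm_sum_le _ _).trans (le_of_eq (Finset.sum_congr rfl fun t _ => ?_))
      rw [norm_mul, norm_exp_neg_I_int, mul_one]
    have hB0 : (0:ℝ) ≤ B := Finset.sum_nonneg fun t _ => norm_nonneg _
    -- inner products of iterates
    have hUU : ∀ p q : ℤ, (inner ℂ (((U ^ p : unitary (H →L[ℂ] H)) : H →L[ℂ] H) ψ)
        (((U ^ q : unitary (H →L[ℂ] H)) : H →L[ℂ] H) ψ) : ℂ)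
        = (inner ℂ ψ (((U ^ (q - p) : unitary (H →L[ℂ] H)) : H →L[ℂ] H) ψ) : ℂ) := by
      intro p q
      have hadj := ContinuousLinearMap.adjoint_inner_right
        (((U ^ p : unitary (H →L[ℂ] H)) : H →L[ℂ] H)) ψ
        ((((U ^ q : unitary (H →L[ℂ] H))) : H →L[ℂ] H) ψ)
      rw [← hadj]
      congr 1
      rw [← ContinuousLinearMap.star_eq_adjoint]
      have h1 : star (((U ^ p : unitary (H →L[ℂ] H)) : H →L[ℂ] H))
          = (((U ^ p)⁻¹ : unitary (H →L[ℂ] H)) : H →L[ℂ] H) := by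
        rw [← Unitary.coe_star, Unitary.star_eq_inv]
      rw [h1]
      have h2 : ((U ^ p)⁻¹ * U ^ q : unitary (H →L[ℂ] H)) = U ^ (q - p) := by
        rw [← zpow_neg, ← zpow_add]
        congr 1
        ring
      rw [← h2]
      rfl
    -- the double-sum representation of ⟪v,v⟫
    have hL : (inner ℂ v v : ℂ) = ∑ p ∈ s, ∑ q ∈ s,
        (starRingEnd ℂ) (c p) * c q *
          ((1 / (2 * (Real.pi : ℂ))) *
            ∫ θ in Set.Ico (0:ℝ) (2*Real.pi),
              Complex.exp (-Complex.I * ((q - p : ℤ) : ℂ) * (θ : ℂ)) * (F θ : ℂ)) := by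
      rw [hvdef]
      rw [sum_inner]
      refine Finset.sum_congr rfl fun p hp => ?_
      rw [inner_smul_left, inner_sum, Finset.mul_sum]
      refine Finset.sum_congr rfl fun q hq => ?_
      rw [inner_smul_right, hUU p q, hFourier (q - p)]
      ring
    -- conjugate of g
    have hconj : ∀ θ : ℝ, (starRingEnd ℂ) (g θ)
        = ∑ p ∈ s, (starRingEnd ℂ) (c p) * Complex.exp (Complex.I * (p:ℂ) * (θ:ℂ)) := by
      intro θ
      rw [hgdef, map_sum]
      refine Finset.sum_congr rfl fun p hp => ?_
      rw [map_mul]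
      congr 1
      rw [← Complex.exp_conj]
      congr 1
      simp [map_mul, Complex.conj_ofReal]
    -- pointwise expansion of conj g * g * F
    have hpt : ∀ θ : ℝ, (starRingEnd ℂ) (g θ) * g θ * (F θ:ℂ)
        = ∑ p ∈ s, ∑ q ∈ s, (starRingEnd ℂ) (c p) * c q *
            (Complex.exp (-Complex.I * ((q - p : ℤ):ℂ) * (θ:ℂ)) * (F θ:ℂ)) := by
      intro θ
      rw [hconj θ, hgdef]
      simp only [Finset.sum_mul, Finset.mul_sum]
      rw [Finset.sum_comm (s := s) (t := s)]
      refine Finset.sum_congr rfl fun p hp => Finset.sum_congr rfl fun q hq => ?_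
      have h2 : Complex.exp (Complex.I * (p:ℂ) * (θ:ℂ)) *
          Complex.exp (-Complex.I * (q:ℂ) * (θ:ℂ))
          = Complex.exp (-Complex.I * ((q - p : ℤ):ℂ) * (θ:ℂ)) := by
        rw [← Complex.exp_add]
        congr 1
        push_cast
        ring
      calc (starRingEnd ℂ) (c p) * Complex.exp (Complex.I * (p:ℂ) * (θ:ℂ)) *
            (c q * Complex.exp (-Complex.I * (q:ℂ) * (θ:ℂ))) * (F θ:ℂ)
          = (starRingEnd ℂ) (c p) * c q *
            ((Complex.exp (Complex.I * (p:ℂ) * (θ:ℂ)) *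
              Complex.exp (-Complex.I * (q:ℂ) * (θ:ℂ))) * (F θ:ℂ)) := by ring
        _ = _ := by rw [h2]
    have hvv : (inner ℂ v v : ℂ) = (1 / (2 * (Real.pi : ℂ))) *
        ∫ θ in Set.Ico (0:ℝ) (2*Real.pi),
          (starRingEnd ℂ) (g θ) * g θ * (F θ:ℂ) := by
      rw [hL]
      rw [show (fun θ : ℝ => (starRingEnd ℂ) (g θ) * g θ * (F θ:ℂ))
          = fun θ : ℝ => ∑ p ∈ s, ∑ q ∈ s, (starRingEnd ℂ) (c p) * c q *
            (Complex.exp (-Complex.I * ((q - p : ℤ):ℂ) * (θ:ℂ)) * (F θ:ℂ)) from funext hpt]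
      rw [integral_finset_sum s fun p _ => integrable_finset_sum s
        fun q _ => ((hexpF (q - p)).const_mul _)]
      rw [Finset.mul_sum]
      refine Finset.sum_congr rfl fun p hp => ?_
      rw [integral_finset_sum s fun q _ => ((hexpF (q - p)).const_mul _), Finset.mul_sum]
      refine Finset.sum_congr rfl fun q hq => ?_
      rw [integral_const_mul]
      ring
    -- pointwise expansion of conj g * g
    have hptg : ∀ θ : ℝ, (starRingEnd ℂ) (g θ) * g θ
        = ∑ p ∈ s, ∑ q ∈ s, (starRingEnd ℂ) (c p) * c q *
            Complex.exp (Complex.I * ((p - q : ℤ):ℂ) * (θ:ℂ)) := by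
      intro θ
      rw [hconj θ, hgdef]
      simp only [Finset.sum_mul, Finset.mul_sum]
      rw [Finset.sum_comm (s := s) (t := s)]
      refine Finset.sum_congr rfl fun p hp => Finset.sum_congr rfl fun q hq => ?_
      have h2 : Complex.exp (Complex.I * (p:ℂ) * (θ:ℂ)) *
          Complex.exp (-Complex.I * (q:ℂ) * (θ:ℂ))
          = Complex.exp (Complex.I * ((p - q : ℤ):ℂ) * (θ:ℂ)) := by
        rw [← Complex.exp_add]
        congr 1
        push_cast
        ring
      calc (starRingEnd ℂ) (c p) * Complex.exp (Complex.I * (p:ℂ) * (θ:ℂ)) *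
            (c q * Complex.exp (-Complex.I * (q:ℂ) * (θ:ℂ)))
          = (starRingEnd ℂ) (c p) * c q *
            (Complex.exp (Complex.I * (p:ℂ) * (θ:ℂ)) *
              Complex.exp (-Complex.I * (q:ℂ) * (θ:ℂ))) := by ring
        _ = _ := by rw [h2]
    -- orthogonality
    have horthC : (∫ θ in Set.Ico (0:ℝ) (2*Real.pi), (starRingEnd ℂ) (g θ) * g θ)
        = ((2*Real.pi * S : ℝ) : ℂ) := by
      rw [show (fun θ : ℝ => (starRingEnd ℂ) (g θ) * g θ)
          = fun θ : ℝ => ∑ p ∈ s, ∑ q ∈ s, (starRingEnd ℂ) (c p) * c q *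
            Complex.exp (Complex.I * ((p - q : ℤ):ℂ) * (θ:ℂ)) from funext hptg]
      rw [integral_finset_sum s fun p _ => integrable_finset_sum s
        fun q _ => ((hexp1 (p - q)).const_mul _)]
      have hps : ∀ p ∈ s, (∫ θ in Set.Ico (0:ℝ) (2*Real.pi),
          ∑ q ∈ s, (starRingEnd ℂ) (c p) * c q *
            Complex.exp (Complex.I * ((p - q : ℤ):ℂ) * (θ:ℂ)))
          = ((‖a p‖^2 : ℝ) : ℂ) * ((2*Real.pi : ℝ) : ℂ) := by
        intro p hp
        rw [integral_finset_sum s fun q _ => ((hexp1 (p - q)).const_mul _)]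
        have hterm : ∀ q ∈ s, (∫ θ in Set.Ico (0:ℝ) (2*Real.pi),
            (starRingEnd ℂ) (c p) * c q *
              Complex.exp (Complex.I * ((p - q : ℤ):ℂ) * (θ:ℂ)))
            = if q = p then ((‖a p‖^2 : ℝ) : ℂ) * ((2*Real.pi : ℝ) : ℂ) else 0 := by
          intro q hq
          rw [integral_const_mul, exp_int_integral (p - q)]
          by_cases hqp : q = p
          · subst hqp
            rw [if_pos rfl, if_pos (sub_self q)]
            have hcc : (starRingEnd ℂ) (c q) * c q = ((‖a q‖^2 : ℝ) : ℂ) := by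
              rw [hcdef]
              simp only []
              rw [Complex.conj_conj, Complex.mul_conj]
              simp [Complex.normSq_eq_norm_sq]
            rw [hcc]
            push_cast
            ring
          · rw [if_neg hqp, if_neg, mul_zero]
            intro h
            exact hqp (sub_eq_zero.mp h).symm
        rw [Finset.sum_congr rfl hterm, Finset.sum_ite_eq' s p
          (fun _ => ((‖a p‖^2 : ℝ) : ℂ) * ((2*Real.pi : ℝ) : ℂ)), if_pos hp]
      rw [Finset.sum_congr rfl hps, ← Finset.sum_mul, hSdef]
      push_cast
      ring
    -- pass to real integrals
    have hnormg : ∀ θ : ℝ, (starRingEnd ℂ) (g θ) * g θ = ((‖g θ‖^2 : ℝ) : ℂ) := by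
      intro θ
      rw [mul_comm, Complex.mul_conj]
      simp [Complex.normSq_eq_norm_sq]
    have hgR : (∫ θ in Set.Ico (0:ℝ) (2*Real.pi), ‖g θ‖^2) = 2*Real.pi*S := by
      have h1 : (∫ θ in Set.Ico (0:ℝ) (2*Real.pi), ((‖g θ‖^2 : ℝ) : ℂ))
          = ((2*Real.pi*S : ℝ) : ℂ) := by
        rw [← horthC]
        exact integral_congr_ae (Eventually.of_forall fun θ => (hnormg θ).symm)
      have h2 : (∫ θ in Set.Ico (0:ℝ) (2*Real.pi), ((‖g θ‖^2 : ℝ) : ℂ))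
          = ((∫ θ in Set.Ico (0:ℝ) (2*Real.pi), ‖g θ‖^2 : ℝ) : ℂ) := integral_ofReal
      exact Complex.ofReal_injective (h2.symm.trans h1)
    have hvv' : (inner ℂ v v : ℂ) =
        (((1/(2*Real.pi)) * ∫ θ in Set.Ico (0:ℝ) (2*Real.pi), ‖g θ‖^2 * F θ : ℝ) : ℂ) := by
      rw [hvv]
      rw [show (fun θ : ℝ => (starRingEnd ℂ) (g θ) * g θ * (F θ:ℂ))
          = fun θ : ℝ => ((‖g θ‖^2 * F θ : ℝ) : ℂ) from funext fun θ => by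
            rw [hnormg θ]; push_cast; ring]
      have h2 : (∫ θ in Set.Ico (0:ℝ) (2*Real.pi), ((‖g θ‖^2 * F θ : ℝ) : ℂ))
          = ((∫ θ in Set.Ico (0:ℝ) (2*Real.pi), ‖g θ‖^2 * F θ : ℝ) : ℂ) := integral_ofReal
      rw [h2]
      push_cast
      ring
    have hnv : ‖v‖^2 = (1/(2*Real.pi)) * ∫ θ in Set.Ico (0:ℝ) (2*Real.pi), ‖g θ‖^2 * F θ := by
      have hn : (inner ℂ v v : ℂ) = ((‖v‖^2 : ℝ) : ℂ) := by
        exact_mod_cast inner_self_eq_norm_sq_to_K (𝕜 := ℂ) v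
      exact Complex.ofReal_injective (hn.symm.trans hvv')
    -- integrability of the real integrands
    have hFg_int : Integrable (fun θ : ℝ => ‖g θ‖^2 * F θ) μ := by
      refine Integrable.mono' (integrable_const (B^2 * C)) ?_ ?_
      · exact Measurable.aestronglyMeasurable (((hg_meas.norm).pow_const 2).mul hF_meas)
      · filter_upwards with θ
        rw [Real.norm_eq_abs, abs_of_nonneg (mul_nonneg (by positivity) (hF_nonneg θ))]
        exact mul_le_mul (by
            have := hgB θ
            exact pow_le_pow_left₀ (norm_nonneg _) this 2)
          (hC θ) (hF_nonneg θ) (by positivity)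
    have hMg_int : Integrable (fun θ : ℝ => ‖g θ‖^2 * M) μ := by
      refine Integrable.mono' (integrable_const (B^2 * M)) ?_ ?_
      · exact Measurable.aestronglyMeasurable (((hg_meas.norm).pow_const 2).mul measurable_const)
      · filter_upwards with θ
        rw [Real.norm_eq_abs, abs_of_nonneg (mul_nonneg (by positivity) hM0)]
        exact mul_le_mul_of_nonneg_right (pow_le_pow_left₀ (norm_nonneg _) (hgB θ) 2) hM0
    have hmono : (∫ θ in Set.Ico (0:ℝ) (2*Real.pi), ‖g θ‖^2 * F θ)
        ≤ ∫ θ in Set.Ico (0:ℝ) (2*Real.pi), ‖g θ‖^2 * M := by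
      refine integral_mono_ae hFg_int hMg_int ?_
      filter_upwards [hFM] with θ hθ
      exact mul_le_mul_of_nonneg_left hθ (sq_nonneg _)
    have hMg : (∫ θ in Set.Ico (0:ℝ) (2*Real.pi), ‖g θ‖^2 * M) = 2*Real.pi*S*M := by
      rw [integral_mul_const, hgR]
    -- the inner product with φ
    have hphiv : (inner ℂ φ v : ℂ) = ((S : ℝ) : ℂ) := by
      rw [hvdef, inner_sum]
      have : ∀ t ∈ s, (inner ℂ φ (c t • (((U ^ t : unitary (H →L[ℂ] H)) : H →L[ℂ] H) ψ)) : ℂ)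
          = ((‖a t‖^2 : ℝ) : ℂ) := by
        intro t ht
        rw [inner_smul_right]
        have hat : (inner ℂ φ (((U ^ t : unitary (H →L[ℂ] H)) : H →L[ℂ] H) ψ) : ℂ) = a t := rfl
        rw [hat, hcdef]
        simp only []
        rw [mul_comm, Complex.mul_conj]
        simp [Complex.normSq_eq_norm_sq]
      rw [Finset.sum_congr rfl this, hSdef]
      push_cast
      ring
    have hS0 : (0:ℝ) ≤ S := Finset.sum_nonneg fun t _ => sq_nonneg _
    have hCS : S ≤ ‖φ‖ * ‖v‖ := by
      have h1 : ‖(inner ℂ φ v : ℂ)‖ ≤ ‖φ‖ * ‖v‖ := norm_inner_le_norm φ v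
      rw [hphiv] at h1
      rwa [Complex.norm_real, Real.norm_eq_abs, abs_of_nonneg hS0] at h1
    have hv2 : ‖v‖^2 ≤ M * S := by
      rw [hnv]
      calc (1/(2*Real.pi)) * ∫ θ in Set.Ico (0:ℝ) (2*Real.pi), ‖g θ‖^2 * F θ
          ≤ (1/(2*Real.pi)) * (2*Real.pi*S*M) := by
            refine mul_le_mul_of_nonneg_left (hmono.trans (le_of_eq hMg)) (by positivity)
        _ = M * S := by field_simp
    show S ≤ M * ‖φ‖ ^ 2
    rcases hS0.eq_or_lt with h | h
    · rw [← h]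
      exact mul_nonneg hM0 (sq_nonneg _)
    · have h1 : S * S ≤ (M * ‖φ‖^2) * S := by
        nlinarith [norm_nonneg φ, norm_nonneg v, mul_le_mul hCS hCS hS0
          (mul_nonneg (norm_nonneg φ) (norm_nonneg v)),
          mul_le_mul_of_nonneg_left hv2 (sq_nonneg ‖φ‖)]
      exact le_of_mul_le_mul_right h1 h
  refine tsum_le_of_sum_le' (le_trans (by simp) (key ∅)) key
end

section
/- If (k_m)_{m≥1} is a strictly increasing sequence of positive integers, then the real number Σ_{m=1}^∞ 2^{−(k_m)!} is irrational. -/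
private lemma strictMono_add_le (g : ℕ → ℕ) (hg : StrictMono g) (a m : ℕ) :
    g a + m ≤ g (a + m) := by
  induction m with
  | zero => simp
  | succ m ih =>
    have h : g (a + m) < g (a + (m + 1)) := hg (by omega)
    omega

/-- If `(k_m)` is a strictly increasing sequence of positive integers, then
`∑_m 2^{-(k_m)!}` is irrational. -/
theorem stmt_17 (k : ℕ → ℕ) (hk : StrictMono k) (hk_pos : ∀ m, 0 < k m) :
    Irrational (∑' m : ℕ, ((2 : ℝ) ^ Nat.factorial (k m))⁻¹) := by
  set f : ℕ → ℝ := fun m => ((2 : ℝ) ^ Nat.factorial (k m))⁻¹ with hf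
  have hkm : ∀ m, m ≤ k m := fun m => hk.le_apply
  have hfact_mono : StrictMono (fun m => Nat.factorial (k m)) := by
    intro a b hab
    exact (Nat.factorial_lt (hk_pos a)).mpr (hk hab)
  have hfle : ∀ m, f m ≤ (2:ℝ)⁻¹ ^ m := by
    intro m
    rw [hf]
    simp only [inv_pow]
    apply inv_anti₀ (by positivity)
    apply pow_le_pow_right₀ one_le_two
    exact le_trans (hkm m) (Nat.self_le_factorial _)
  have hfpos : ∀ m, 0 < f m := fun m => by positivity
  have hsum : Summable f :=
    Summable.of_nonneg_of_le (fun m => (hfpos m).le) hfle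
      (summable_geometric_of_lt_one (by norm_num) (by norm_num))
  rintro ⟨q, hq⟩
  set n := q.den + 1 with hn
  set N := Nat.factorial (k n) with hN
  set F := Nat.factorial (k (n+1)) with hF
  have hsplit := Summable.sum_add_tsum_nat_add (f := f) (n+1) hsum
  set P := ∑ m ∈ Finset.range (n+1), f m with hP
  set T := ∑' m : ℕ, f (m + (n+1)) with hT
  -- tail bound
  have htail_le : T ≤ 2 * ((2:ℝ) ^ F)⁻¹ := by
    have hterm : ∀ m : ℕ, f (m + (n+1)) ≤ (2:ℝ)⁻¹ ^ (F + m) := by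
      intro m
      have hle : F + m ≤ Nat.factorial (k (m + (n+1))) := by
        have h := strictMono_add_le (fun m => Nat.factorial (k m)) hfact_mono (n+1) m
        rw [add_comm m (n+1)]
        exact h
      rw [hf]
      simp only [inv_pow]
      apply inv_anti₀ (by positivity)
      exact pow_le_pow_right₀ one_le_two hle
    have hgsum : Summable (fun m : ℕ => (2:ℝ)⁻¹ ^ (F + m)) := by
      simp_rw [pow_add]
      exact (summable_geometric_of_lt_one (by norm_num) (by norm_num)).mul_left _
    have := Summable.tsum_le_tsum hterm (hsum.comp_injective (add_left_injective (n+1))) hgsum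
    calc T ≤ ∑' m : ℕ, (2:ℝ)⁻¹ ^ (F + m) := this
      _ = (2:ℝ)⁻¹ ^ F * ∑' m : ℕ, (2:ℝ)⁻¹ ^ m := by
          simp_rw [pow_add]; exact tsum_mul_left
      _ = 2 * ((2:ℝ) ^ F)⁻¹ := by
          rw [tsum_geometric_of_lt_one (by norm_num) (by norm_num), inv_pow]
          norm_num
          ring
  have hTpos : 0 < T := by
    apply Summable.tsum_pos (hsum.comp_injective (add_left_injective (n+1))) 
      (fun m => (hfpos _).le) 0
    exact hfpos _
  -- integer equal to 2^N * P
  set A : ℕ := ∑ m ∈ Finset.range (n+1), 2 ^ (N - Nat.factorial (k m)) with hA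
  have hAeq : (A : ℝ) = 2 ^ N * P := by
    rw [hA, hP, Finset.mul_sum]
    push_cast
    apply Finset.sum_congr rfl
    intro m hm
    have hle : Nat.factorial (k m) ≤ N :=
      hfact_mono.monotone (Nat.lt_succ_iff.mp (Finset.mem_range.mp hm))
    rw [hf]
    simp only
    rw [pow_sub₀ (2:ℝ) two_ne_zero hle]
  -- the integer z
  set z : ℤ := q.num * 2 ^ N - (q.den : ℤ) * A with hz
  have hqden : ((q.den : ℝ)) * (q : ℝ) = q.num := by
    rw [Rat.cast_def]
    rw [mul_div_assoc', mul_comm, mul_div_assoc, div_self (by exact_mod_cast q.den_ne_zero), mul_one]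
  have hzeq : (z : ℝ) = (q.den : ℝ) * 2 ^ N * T := by
    have hS : P + T = (q : ℝ) := by rw [hq]; exact hsplit
    push_cast [hz]
    rw [hAeq]
    have : T = (q:ℝ) - P := by linarith
    rw [this, ← hqden]
    ring
  -- bounds
  have hzpos : (0:ℝ) < (z : ℝ) := by
    rw [hzeq]
    have : (0:ℝ) < (q.den : ℝ) := by positivity
    positivity
  have hlt : (z : ℝ) < 1 := by
    rw [hzeq]
    have key : (q.den : ℝ) * 2 ^ N * (2 * ((2:ℝ) ^ F)⁻¹) < 1 := by
      rw [show (q.den:ℝ) * 2 ^ N * (2 * ((2:ℝ) ^ F)⁻¹)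
            = ((q.den:ℝ) * 2 ^ (N+1)) / 2 ^ F by ring, div_lt_one (by positivity)]
      have hnat : q.den * 2 ^ (N + 1) < 2 ^ F := by
        have h1 : q.den < 2 ^ q.den := Nat.lt_two_pow_self
        have h2 : N + 1 + q.den ≤ F := by
          have hk1 : k n + 1 ≤ k (n + 1) := hk (Nat.lt_succ_self n)
          have h3 : Nat.factorial (k n + 1) ≤ F := by
            rw [hF]; exact Nat.factorial_le hk1
          have h4 : Nat.factorial (k n + 1) = (k n + 1) * N := by
            rw [hN, Nat.factorial_succ]
          have h5 : n ≤ k n := hkm n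
          have hN1 : 1 ≤ N := Nat.one_le_iff_ne_zero.mpr (Nat.factorial_ne_zero _)
          nlinarith
        calc q.den * 2 ^ (N + 1) < 2 ^ q.den * 2 ^ (N+1) := by
              have hp : 0 < 2 ^ (N+1) := Nat.pow_pos (by norm_num)
              exact (Nat.mul_lt_mul_right hp).mpr h1
          _ = 2 ^ (N + 1 + q.den) := by rw [← pow_add]; ring_nf
          _ ≤ 2 ^ F := Nat.pow_le_pow_right (by norm_num) h2
      have := (Nat.cast_lt (α := ℝ)).mpr hnat
      push_cast at this
      exact this
    calc (q.den : ℝ) * 2 ^ N * T ≤ (q.den : ℝ) * 2 ^ N * (2 * ((2:ℝ)^F)⁻¹) := by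
          apply mul_le_mul_of_nonneg_left htail_le (by positivity)
      _ < 1 := key
  have hz1 : (1:ℤ) ≤ z := by exact_mod_cast hzpos
  have : (1:ℝ) ≤ (z:ℝ) := by exact_mod_cast hz1
  linarith
end
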